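/- Fractional integration by parts (order α ∈ (0,1)): for C¹ functions x, y : [a,b] → ℝ, one has ∫ₐᵇ y(t)·(ᶜₐD_t^α x)(t) dt = ∫ₐᵇ x(t)·(ₜD_b^α y)(t) dt + [ (ₜI_b^{1−α} y)(t) · x(t) ]ₐᵇ, provided all the fractional operators involved are well defined and continuous on [a,b]. -/

import Mathlib

open MeasureTheory Set intervalIntegral Filter

section FracAux

lemma ker_ii {r : ℝ} (hr : -1 < r) (s c : ℝ) :
    IntervalIntegrable (fun τ => (τ - s) ^ r) volume s c := by
  have h := (intervalIntegrable_rpow' (a := 0) (b := c - s) hr).comp_sub_right s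
  simpa using h

lemma ker_ii' {r : ℝ} (hr : -1 < r) (s c : ℝ) :
    IntervalIntegrable (fun τ => (c - τ) ^ r) volume s c := by
  have h := ((intervalIntegrable_rpow' (a := c - c) (b := c - s) hr).comp_sub_left c).symm
  simpa using h

lemma ker_int {r : ℝ} (hr : -1 < r) (s t : ℝ) :
    ∫ σ in s..t, (t - σ) ^ r = (t - s) ^ (r + 1) / (r + 1) := by
  have h := intervalIntegral.integral_comp_sub_left (a := s) (b := t) (fun u => u ^ r) t
  simp only [sub_self] at h
  rw [h, integral_rpow (Or.inl hr), Real.zero_rpow (by linarith : (0:ℝ) < r + 1).ne', sub_zero]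

lemma ker_int_left {r : ℝ} (hr : -1 < r) (s t : ℝ) :
    ∫ τ in s..t, (τ - s) ^ r = (t - s) ^ (r + 1) / (r + 1) := by
  have h := intervalIntegral.integral_comp_sub_right (a := s) (b := t) (fun u => u ^ r) s
  simp only [sub_self] at h
  rw [h, integral_rpow (Or.inl hr), Real.zero_rpow (by linarith : (0:ℝ) < r + 1).ne', sub_zero]

lemma fubini_triangle {a b r : ℝ} (hab : a ≤ b) (hr1 : -1 < r) (hr0 : r < 0)
    (φ ψ : ℝ → ℝ) (hφ : ContinuousOn φ (Icc a b))
    (hψm : AEStronglyMeasurable ψ (volume.restrict (Ioc a b)))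
    {M : ℝ} (hM : 0 ≤ M)
    (hψb : ∀ᵐ τ ∂(volume.restrict (Ioc a b)), |ψ τ| ≤ M) :
    ∫ t in a..b, φ t * ∫ τ in a..t, (t - τ) ^ r * ψ τ
      = ∫ τ in a..b, ψ τ * ∫ t in τ..b, (t - τ) ^ r * φ t := by
  obtain ⟨Φ, hΦ⟩ := isCompact_Icc.exists_bound_of_continuousOn hφ
  have hΦ0 : 0 ≤ Φ := le_trans (norm_nonneg _) (hΦ a ⟨le_refl a, hab⟩)
  set μ := volume.restrict (Ioc a b) with hμ
  haveI : IsFiniteMeasure μ := by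
    constructor
    rw [hμ, Measure.restrict_apply_univ]
    exact measure_Ioc_lt_top
  set F : ℝ → ℝ → ℝ := fun t τ => if τ < t then (t - τ) ^ r * ψ τ * φ t else 0 with hF
  -- measurability on the product
  have hFm : AEStronglyMeasurable (Function.uncurry F) (μ.prod μ) := by
    have h1 : Measurable fun p : ℝ × ℝ => (p.1 - p.2) ^ r := by measurability
    have h2 : AEStronglyMeasurable (fun p : ℝ × ℝ => ψ p.2) (μ.prod μ) := hψm.comp_snd
    have h3 : AEStronglyMeasurable (fun p : ℝ × ℝ => φ p.1) (μ.prod μ) :=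
      ((hφ.mono Ioc_subset_Icc_self).aestronglyMeasurable measurableSet_Ioc).comp_fst
    have heq : Function.uncurry F = Set.indicator {p : ℝ × ℝ | p.2 < p.1}
        (fun p => (p.1 - p.2) ^ r * ψ p.2 * φ p.1) := by
      ext p
      by_cases h : p.2 < p.1 <;>
        simp [Function.uncurry, hF, h, Set.indicator_apply, Set.mem_setOf_eq]
    rw [heq]
    exact ((h1.aestronglyMeasurable.mul h2).mul h3).indicator
      (measurableSet_lt measurable_snd measurable_fst)
  -- slice integrability
  have hkerIoo : ∀ t, a ≤ t → IntegrableOn (fun τ => (t - τ) ^ r) (Ioo a t) volume := by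
    intro t ht
    exact (intervalIntegrable_iff.mp (ker_ii' hr1 a t)).mono_set
      (by rw [uIoc_of_le ht]; exact Ioo_subset_Ioc_self)
  have hFind : ∀ t, ∀ τ ∈ Ioc a b,
      F t τ = (Ioo a t).indicator (fun τ => (t - τ) ^ r * ψ τ * φ t) τ := by
    intro t τ hτ
    by_cases h : τ < t
    · rw [Set.indicator_of_mem (Set.mem_Ioo.mpr ⟨hτ.1, h⟩)]; simp only [hF, if_pos h]
    · rw [Set.indicator_of_notMem (fun hm => h (Set.mem_Ioo.mp hm).2)]
      simp only [hF, if_neg h]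
  have hindInt : ∀ t ∈ Ioc a b,
      Integrable ((Ioo a t).indicator (fun τ => (t - τ) ^ r * ψ τ * φ t)) μ := by
    intro t ht
    rw [integrable_indicator_iff measurableSet_Ioo]
    have hres : μ.restrict (Ioo a t) = volume.restrict (Ioo a t) := by
      rw [hμ, Measure.restrict_restrict measurableSet_Ioo,
        Set.inter_eq_left.mpr (fun τ hτ => Set.mem_Ioc.mpr ⟨(Set.mem_Ioo.mp hτ).1, le_trans (Set.mem_Ioo.mp hτ).2.le ht.2⟩)]
    rw [IntegrableOn, hres]
    have hbase : Integrable (fun τ => ψ τ * (t - τ) ^ r) (volume.restrict (Ioo a t)) := by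
      refine Integrable.bdd_mul (c := M) (hkerIoo t ht.1.le) ?_ ?_
      · exact hψm.mono_measure (Measure.restrict_mono
          (fun τ hτ => Set.mem_Ioc.mpr ⟨(Set.mem_Ioo.mp hτ).1, le_trans (Set.mem_Ioo.mp hτ).2.le ht.2⟩) le_rfl)
      · have hsub : Ioo a t ⊆ Ioc a b := fun τ hτ =>
          Set.mem_Ioc.mpr ⟨(Set.mem_Ioo.mp hτ).1, le_trans (Set.mem_Ioo.mp hτ).2.le ht.2⟩
        have h2 : ∀ᵐ τ ∂(volume.restrict (Ioo a t)), |ψ τ| ≤ M :=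
          ae_mono (Measure.restrict_mono hsub le_rfl) hψb
        filter_upwards [h2] with τ hτ
        simpa [Real.norm_eq_abs] using hτ
    have : (fun τ => (t - τ) ^ r * ψ τ * φ t) = fun τ => (ψ τ * (t - τ) ^ r) * φ t := by
      funext τ; ring
    rw [this]
    exact hbase.mul_const _
  have hslice : ∀ t ∈ Ioc a b, Integrable (F t) μ := by
    intro t ht
    refine (hindInt t ht).congr ?_
    filter_upwards [ae_restrict_mem measurableSet_Ioc] with τ hτ
    exact (hFind t τ hτ).symm
  -- bound for the iterated norm integral
  have hnormbd : ∀ t ∈ Ioc a b, (∫ τ, ‖F t τ‖ ∂μ) ≤ M * Φ * ((b - a) ^ (r + 1) / (r + 1)) := by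
    intro t ht
    have hint1 : Integrable (fun τ => ‖F t τ‖) μ := (hslice t ht).norm
    have hint2 : Integrable ((Ioo a t).indicator (fun τ => (t - τ) ^ r * (M * Φ))) μ := by
      rw [integrable_indicator_iff measurableSet_Ioo]
      have hres : μ.restrict (Ioo a t) = volume.restrict (Ioo a t) := by
        rw [hμ, Measure.restrict_restrict measurableSet_Ioo,
          Set.inter_eq_left.mpr (fun τ hτ => Set.mem_Ioc.mpr ⟨(Set.mem_Ioo.mp hτ).1, le_trans (Set.mem_Ioo.mp hτ).2.le ht.2⟩)]
      rw [IntegrableOn, hres]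
      exact (hkerIoo t ht.1.le).mul_const _
    have hle : ∀ᵐ τ ∂μ, ‖F t τ‖ ≤ (Ioo a t).indicator (fun τ => (t - τ) ^ r * (M * Φ)) τ := by
      filter_upwards [ae_restrict_mem measurableSet_Ioc, hψb] with τ hτ hψτ
      by_cases h : τ < t
      · rw [Set.indicator_of_mem (Set.mem_Ioo.mpr ⟨hτ.1, h⟩)]
        simp only [hF, if_pos h]
        rw [Real.norm_eq_abs, abs_mul, abs_mul]
        have hk : |(t - τ) ^ r| = (t - τ) ^ r := abs_of_nonneg (Real.rpow_nonneg (by linarith) r)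
        rw [hk, mul_assoc]
        refine mul_le_mul_of_nonneg_left ?_ (Real.rpow_nonneg (by linarith) r)
        have hφτ : |φ t| ≤ Φ := by
          simpa [Real.norm_eq_abs] using hΦ t ⟨ht.1.le, ht.2⟩
        exact mul_le_mul hψτ hφτ (abs_nonneg _) hM
      · rw [hF]; simp only [if_neg h, norm_zero]
        exact Set.indicator_apply_nonneg (fun hm =>
          mul_nonneg (Real.rpow_nonneg (by rcases hm with ⟨h1, h2⟩; linarith) r) (mul_nonneg hM hΦ0))
    calc ∫ τ, ‖F t τ‖ ∂μ ≤ ∫ τ, (Ioo a t).indicator (fun τ => (t - τ) ^ r * (M * Φ)) τ ∂μ :=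
          integral_mono_ae hint1 hint2 hle
      _ = ∫ τ in Ioo a t, (t - τ) ^ r * (M * Φ) ∂μ := integral_indicator measurableSet_Ioo
      _ = ∫ τ in Ioo a t, (t - τ) ^ r * (M * Φ) := by
          rw [hμ, Measure.restrict_restrict measurableSet_Ioo,
            Set.inter_eq_left.mpr (fun τ hτ => Set.mem_Ioc.mpr ⟨(Set.mem_Ioo.mp hτ).1, le_trans (Set.mem_Ioo.mp hτ).2.le ht.2⟩)]
      _ = (∫ τ in Ioo a t, (t - τ) ^ r) * (M * Φ) := MeasureTheory.integral_mul_const _ _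
      _ = ((t - a) ^ (r + 1) / (r + 1)) * (M * Φ) := by
          rw [← integral_Ioc_eq_integral_Ioo, ← intervalIntegral.integral_of_le ht.1.le,
            ker_int hr1 a t]
      _ ≤ ((b - a) ^ (r + 1) / (r + 1)) * (M * Φ) := by
          refine mul_le_mul_of_nonneg_right ?_ (mul_nonneg hM hΦ0)
          have h1 : (t - a) ^ (r + 1) ≤ (b - a) ^ (r + 1) :=
            Real.rpow_le_rpow (by linarith [ht.1]) (by linarith [ht.2]) (by linarith)
          exact div_le_div_of_nonneg_right h1 (by linarith) |>.trans le_rfl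
      _ = M * Φ * ((b - a) ^ (r + 1) / (r + 1)) := by ring
  -- product integrability
  have hInt : Integrable (Function.uncurry F) (μ.prod μ) := by
    rw [integrable_prod_iff hFm]
    constructor
    · filter_upwards [ae_restrict_mem measurableSet_Ioc] with t ht
      exact hslice t ht
    · refine Integrable.mono' (integrable_const (M * Φ * ((b - a) ^ (r + 1) / (r + 1))))
        (hFm.norm.integral_prod_right') ?_
      filter_upwards [ae_restrict_mem measurableSet_Ioc] with t ht
      rw [Real.norm_eq_abs, abs_of_nonneg (integral_nonneg (fun τ => norm_nonneg _))]
      exact hnormbd t ht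
  -- the swap
  have hswap := MeasureTheory.integral_integral_swap hInt
  -- left side
  have hL : ∫ t in a..b, φ t * ∫ τ in a..t, (t - τ) ^ r * ψ τ
      = ∫ t, (∫ τ, F t τ ∂μ) ∂μ := by
    rw [intervalIntegral.integral_of_le hab]
    refine setIntegral_congr_fun measurableSet_Ioc (fun t ht => ?_)
    have h1 : ∫ τ, F t τ ∂μ
        = ∫ τ, (Ioo a t).indicator (fun τ => (t - τ) ^ r * ψ τ * φ t) τ ∂μ :=
      setIntegral_congr_fun measurableSet_Ioc (fun τ hτ => hFind t τ hτ)
    rw [h1, MeasureTheory.integral_indicator measurableSet_Ioo, hμ,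
      Measure.restrict_restrict measurableSet_Ioo,
      Set.inter_eq_left.mpr (fun τ hτ => Set.mem_Ioc.mpr
        ⟨(Set.mem_Ioo.mp hτ).1, le_trans (Set.mem_Ioo.mp hτ).2.le ht.2⟩)]
    have h2 : (fun τ => (t - τ) ^ r * ψ τ * φ t) = fun τ => ((t - τ) ^ r * ψ τ) * φ t := by
      funext τ; ring
    rw [h2, MeasureTheory.integral_mul_const, ← integral_Ioc_eq_integral_Ioo,
      ← intervalIntegral.integral_of_le ht.1.le]
    ring
  -- right side
  have hR : ∫ τ in a..b, ψ τ * ∫ t in τ..b, (t - τ) ^ r * φ t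
      = ∫ τ, (∫ t, F t τ ∂μ) ∂μ := by
    rw [intervalIntegral.integral_of_le hab]
    refine setIntegral_congr_fun measurableSet_Ioc (fun τ hτ => ?_)
    have h1 : ∫ t, F t τ ∂μ
        = ∫ t, (Ioc τ b).indicator (fun t => ψ τ * ((t - τ) ^ r * φ t)) t ∂μ := by
      refine setIntegral_congr_fun measurableSet_Ioc (fun t ht => ?_)
      by_cases h : τ < t
      · rw [Set.indicator_of_mem (Set.mem_Ioc.mpr ⟨h, ht.2⟩)]
        simp only [hF, if_pos h]; ring
      · rw [Set.indicator_of_notMem (fun hm => h (Set.mem_Ioc.mp hm).1)]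
        simp only [hF, if_neg h]
    rw [h1, MeasureTheory.integral_indicator measurableSet_Ioc, hμ,
      Measure.restrict_restrict measurableSet_Ioc,
      Set.inter_eq_left.mpr (fun t ht => Set.mem_Ioc.mpr
        ⟨lt_trans hτ.1 (Set.mem_Ioc.mp ht).1, (Set.mem_Ioc.mp ht).2⟩),
      ← intervalIntegral.integral_of_le hτ.2, intervalIntegral.integral_const_mul]
  rw [hL, hR] at *
  exact hswap

lemma cont_at_param {a b r : ℝ} (hr1 : -1 < r) (hr0 : r < 0)
    {h : ℝ → ℝ} (hh : ContinuousOn h (Icc a b)) {s₀ : ℝ} (hs₀ : s₀ ∈ Ioo a b) :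
    ContinuousAt (fun s => ∫ τ in s..b, (τ - s) ^ r * h τ) s₀ := by
  obtain ⟨C, hC⟩ := isCompact_Icc.exists_bound_of_continuousOn hh
  have hC0 : 0 ≤ C := le_trans (norm_nonneg _) (hC a ⟨le_refl a, by linarith [hs₀.1, hs₀.2]⟩)
  set μ₀ := volume.restrict (Ioc 0 (b - a)) with hμ₀
  set F : ℝ → ℝ → ℝ := fun s u => (Ioo 0 (b - s)).indicator (fun u => u ^ r * h (u + s)) u
    with hFdef
  -- the integral equals a fixed-domain integral, for s ∈ Ioo a b
  have hrepr : ∀ s ∈ Ioo a b, (∫ τ in s..b, (τ - s) ^ r * h τ) = ∫ u, F s u ∂μ₀ := by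
    intro s hs
    have h1 := intervalIntegral.integral_comp_add_right
      (a := 0) (b := b - s) (fun τ => (τ - s) ^ r * h τ) s
    simp only [zero_add, sub_add_cancel, add_sub_cancel_right] at h1
    rw [← h1, intervalIntegral.integral_of_le (by linarith [hs.2]),
      integral_Ioc_eq_integral_Ioo]
    rw [hμ₀]
    have h2 : ∫ u, F s u ∂(volume.restrict (Ioc 0 (b - a)))
        = ∫ u in Ioo 0 (b - s), u ^ r * h (u + s) := by
      rw [hFdef, MeasureTheory.integral_indicator measurableSet_Ioo,
        Measure.restrict_restrict measurableSet_Ioo,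
        Set.inter_eq_left.mpr (fun u hu => Set.mem_Ioc.mpr
          ⟨(Set.mem_Ioo.mp hu).1, by linarith [(Set.mem_Ioo.mp hu).2, hs.1]⟩)]
    rw [h2]
  have hmem : Ioo a b ∈ nhds s₀ := Ioo_mem_nhds hs₀.1 hs₀.2
  refine ContinuousAt.congr (f := fun s => ∫ u, F s u ∂μ₀) ?_ ?_
  · -- continuity of fixed-domain integral
    refine continuousAt_of_dominated (bound := fun u => u ^ r * C) ?_ ?_ ?_ ?_
    · filter_upwards [hmem] with s hs
      rw [hFdef]
      rw [aestronglyMeasurable_indicator_iff measurableSet_Ioo]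
      have : ContinuousOn (fun u : ℝ => u ^ r * h (u + s)) (Ioo 0 (b - s)) := by
        refine ContinuousOn.mul ?_ ?_
        · exact fun u hu => (Real.continuousAt_rpow_const u r
            (Or.inl (ne_of_gt (Set.mem_Ioo.mp hu).1))).continuousWithinAt
        · refine (hh.comp (continuous_add_right s).continuousOn ?_)
          intro u hu
          have h1 := (Set.mem_Ioo.mp hu).1
          have h2 := (Set.mem_Ioo.mp hu).2
          simp only [Set.mem_Icc]
          exact ⟨by linarith [hs.1], by linarith⟩
      have hres : μ₀.restrict (Ioo 0 (b - s)) = volume.restrict (Ioo 0 (b - s)) := by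
        rw [hμ₀, Measure.restrict_restrict measurableSet_Ioo,
          Set.inter_eq_left.mpr (fun u hu => Set.mem_Ioc.mpr
            ⟨(Set.mem_Ioo.mp hu).1, by linarith [(Set.mem_Ioo.mp hu).2, hs.1]⟩)]
      rw [hres]
      exact this.aestronglyMeasurable measurableSet_Ioo
    · filter_upwards [hmem] with s hs
      filter_upwards [ae_restrict_mem measurableSet_Ioc] with u hu
      by_cases hm : u ∈ Ioo 0 (b - s)
      · simp only [hFdef]
        rw [Set.indicator_of_mem hm]
        rw [Real.norm_eq_abs, abs_mul,
          abs_of_nonneg (Real.rpow_nonneg (Set.mem_Ioo.mp hm).1.le r)]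
        refine mul_le_mul_of_nonneg_left ?_ (Real.rpow_nonneg (Set.mem_Ioo.mp hm).1.le r)
        have := hC (u + s) (Set.mem_Icc.mpr ⟨by linarith [(Set.mem_Ioo.mp hm).1, hs.1],
          by linarith [(Set.mem_Ioo.mp hm).2]⟩)
        simpa [Real.norm_eq_abs] using this
      · simp only [hFdef]
        rw [Set.indicator_of_notMem hm, norm_zero]
        exact mul_nonneg (Real.rpow_nonneg (Set.mem_Ioc.mp hu).1.le r) hC0
    · -- integrable bound
      have := intervalIntegrable_iff.mp (intervalIntegrable_rpow' (a := 0) (b := b - a) hr1)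
      rw [uIoc_of_le (by linarith [hs₀.1, hs₀.2])] at this
      exact this.mul_const C
    · -- a.e. continuity in s
      have hne : ∀ᵐ u ∂μ₀, u ≠ b - s₀ := by
        refine ae_restrict_of_ae ?_
        rw [ae_iff]
        refine measure_mono_null (fun u hu => ?_)
          (by simp : (volume : Measure ℝ) {b - s₀} = 0)
        simp only [Set.mem_setOf_eq, not_not] at hu
        simpa using hu
      filter_upwards [hne, ae_restrict_mem measurableSet_Ioc] with u hu hu'
      by_cases hlt : u < b - s₀
      · -- eventually indicator is on
        have hev : ∀ᶠ s in nhds s₀, F s u = u ^ r * h (u + s) := by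
          have hevlt : ∀ᶠ s in nhds s₀, s < b - u :=
            eventually_of_mem (Iio_mem_nhds (by linarith : s₀ < b - u)) (fun s hs => hs)
          filter_upwards [hevlt] with s hs
          simp only [hFdef]
          rw [Set.indicator_of_mem (Set.mem_Ioo.mpr ⟨(Set.mem_Ioc.mp hu').1, by linarith⟩)]
        have hcont : ContinuousAt (fun s => u ^ r * h (u + s)) s₀ := by
          refine ContinuousAt.mul continuousAt_const ?_
          have hin : ContinuousAt h (u + s₀) :=
            hh.continuousAt (Icc_mem_nhds (by linarith [(Set.mem_Ioc.mp hu').1, hs₀.1])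
              (by linarith))
          exact hin.comp ((continuous_const.add continuous_id).continuousAt)
        have hev' : (fun s => F s u) =ᶠ[nhds s₀] (fun s => u ^ r * h (u + s)) := hev
        exact hcont.congr hev'.symm
      · have hgt : b - s₀ < u := lt_of_le_of_ne (not_lt.mp hlt) (Ne.symm hu)
        have hev : ∀ᶠ s in nhds s₀, F s u = 0 := by
          have hevgt : ∀ᶠ s in nhds s₀, b - u < s :=
            eventually_of_mem (Ioi_mem_nhds (by linarith : b - u < s₀)) (fun s hs => hs)
          filter_upwards [hevgt] with s hs
          simp only [hFdef]
          rw [Set.indicator_of_notMem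
            (fun hm => absurd (Set.mem_Ioo.mp hm).2 (by push_neg; linarith))]
        have hev' : (fun s => F s u) =ᶠ[nhds s₀] (fun _ => (0:ℝ)) := hev
        exact continuousAt_const.congr hev'.symm
  · -- eventual equality
    filter_upwards [hmem] with s hs
    exact (hrepr s hs).symm

lemma param_bound {a b r : ℝ} (hr1 : -1 < r) (hr0 : r < 0) {h : ℝ → ℝ}
    (hh : ContinuousOn h (Icc a b)) {C : ℝ} (hC0 : 0 ≤ C)
    (hC : ∀ τ ∈ Icc a b, |h τ| ≤ C) {s : ℝ} (hs : s ∈ Icc a b) :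
    |∫ τ in s..b, (τ - s) ^ r * h τ| ≤ C * ((b - a) ^ (r + 1) / (r + 1)) := by
  have hsb : s ≤ b := hs.2
  have huIcc : uIcc s b = Icc s b := uIcc_of_le hsb
  have hsub : Icc s b ⊆ Icc a b := Icc_subset_Icc hs.1 le_rfl
  have hint1 : IntervalIntegrable (fun τ => (τ - s) ^ r * h τ) volume s b :=
    (ker_ii hr1 s b).mul_continuousOn (by rw [huIcc]; exact hh.mono hsub)
  have hint2 : IntervalIntegrable (fun τ => (τ - s) ^ r * C) volume s b :=
    (ker_ii hr1 s b).mul_const _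
  calc |∫ τ in s..b, (τ - s) ^ r * h τ| ≤ ∫ τ in s..b, |(τ - s) ^ r * h τ| := by
        simpa [Real.norm_eq_abs, abs_mul] using
          intervalIntegral.norm_integral_le_integral_norm
            (f := fun τ => (τ - s) ^ r * h τ) (μ := volume) hsb
    _ ≤ ∫ τ in s..b, (τ - s) ^ r * C := by
        refine intervalIntegral.integral_mono_on hsb hint1.abs hint2 (fun τ hτ => ?_)
        rw [abs_mul] at *
        rw [abs_of_nonneg (Real.rpow_nonneg (by linarith [hτ.1]) r)]
        exact mul_le_mul_of_nonneg_left (hC τ (hsub hτ)) (Real.rpow_nonneg (by linarith [hτ.1]) r)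
    _ = ((b - s) ^ (r + 1) / (r + 1)) * C := by rw [intervalIntegral.integral_mul_const, ker_int_left hr1 s b]
    _ ≤ ((b - a) ^ (r + 1) / (r + 1)) * C := by
        refine mul_le_mul_of_nonneg_right (div_le_div_of_nonneg_right ?_ (by linarith)) hC0
        exact Real.rpow_le_rpow (by linarith [hs.2]) (by linarith [hs.1]) (by linarith)
    _ = C * ((b - a) ^ (r + 1) / (r + 1)) := by ring

end FracAux

/-- Left Caputo fractional derivative of order `α ∈ (0,1)` with base point `a`. -/
noncomputable def caputoDeriv (a α : ℝ) (x : ℝ → ℝ) (t : ℝ) : ℝ :=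
  (1 / Real.Gamma (1 - α)) * ∫ τ in a..t, (t - τ) ^ (-α) * deriv x τ

/-- Right Riemann–Liouville fractional integral of order `β > 0` with base point `b`. -/
noncomputable def rlIntRight (b β : ℝ) (x : ℝ → ℝ) (t : ℝ) : ℝ :=
  (1 / Real.Gamma β) * ∫ τ in t..b, (τ - t) ^ (β - 1) * x τ

/-- Right Riemann–Liouville fractional derivative of order `α ∈ (0,1)`. -/
noncomputable def rlDerivRight (b α : ℝ) (x : ℝ → ℝ) (t : ℝ) : ℝ :=
  -((1 / Real.Gamma (1 - α)) *
    deriv (fun s => ∫ τ in s..b, (τ - s) ^ (-α) * x τ) t)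

/-- Fractional integration by parts for `α ∈ (0,1)`. -/
theorem fractional_integration_by_parts (a b α : ℝ) (hab : a < b)
    (hα : α ∈ Set.Ioo (0:ℝ) 1) (x y : ℝ → ℝ)
    (hx : ContDiffOn ℝ 1 x (Set.Icc a b)) (hy : ContDiffOn ℝ 1 y (Set.Icc a b))
    (hcx : ContinuousOn (caputoDeriv a α x) (Set.Icc a b))
    (hdy : ContinuousOn (rlDerivRight b α y) (Set.Icc a b))
    (hiy : ContinuousOn (rlIntRight b (1 - α) y) (Set.Icc a b)) :
    ∫ t in a..b, y t * caputoDeriv a α x t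
      = (∫ t in a..b, x t * rlDerivRight b α y t)
        + (rlIntRight b (1 - α) y b * x b - rlIntRight b (1 - α) y a * x a) := by
  obtain ⟨hα0, hα1⟩ := hα
  have h1α : (0:ℝ) < 1 - α := by linarith
  have hΓ : 0 < Real.Gamma (1 - α) := Real.Gamma_pos_of_pos h1α
  set c : ℝ := 1 / Real.Gamma (1 - α) with hc
  have hrα1 : (-1:ℝ) < -α := by linarith
  have hrα0 : -α < 0 := by linarith
  have hr1α1 : (-1:ℝ) < 1 - α := by linarith
  set gx := derivWithin x (Set.Icc a b) with hgx
  set gy := derivWithin y (Set.Icc a b) with hgy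
  have hgxc : ContinuousOn gx (Icc a b) :=
    hx.continuousOn_derivWithin (uniqueDiffOn_Icc hab) le_rfl
  have hgyc : ContinuousOn gy (Icc a b) :=
    hy.continuousOn_derivWithin (uniqueDiffOn_Icc hab) le_rfl
  have hxc : ContinuousOn x (Icc a b) := hx.continuousOn
  have hyc : ContinuousOn y (Icc a b) := hy.continuousOn
  have hxD : ∀ t ∈ Ioo a b, HasDerivAt x (gx t) t := by
    intro t ht
    have hmem : Icc a b ∈ nhds t := Icc_mem_nhds ht.1 ht.2
    have hd := (hx.differentiableOn one_ne_zero t ⟨ht.1.le, ht.2.le⟩).differentiableAt hmem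
    rw [hgx, derivWithin_of_mem_nhds hmem]
    exact hd.hasDerivAt
  have hyD : ∀ t ∈ Ioo a b, HasDerivAt y (gy t) t := by
    intro t ht
    have hmem : Icc a b ∈ nhds t := Icc_mem_nhds ht.1 ht.2
    have hd := (hy.differentiableOn one_ne_zero t ⟨ht.1.le, ht.2.le⟩).differentiableAt hmem
    rw [hgy, derivWithin_of_mem_nhds hmem]
    exact hd.hasDerivAt
  set G : ℝ → ℝ := (fun s => ∫ τ in s..b, (τ - s) ^ (-α) * y τ) with hG
  set K : ℝ → ℝ := (fun s => ∫ τ in s..b, (τ - s) ^ (1 - α) * gy τ) with hK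
  set E : ℝ → ℝ := (fun σ => ∫ τ in σ..b, (τ - σ) ^ (-α) * gy τ) with hE
  have hJeq : ∀ t, rlIntRight b (1 - α) y t = c * G t := by
    intro t
    rw [rlIntRight, hG, hc]
    simp only [show (1:ℝ) - α - 1 = -α by ring]
  -- Step S1 : integration by parts in the inner variable
  have hS1 : ∀ s ∈ Icc a b, (1 - α) * G s + K s = (b - s) ^ (1 - α) * y b := by
    intro s hs
    rcases eq_or_lt_of_le hs.2 with hsb | hsb
    · subst hsb
      simp [hG, hK, Real.zero_rpow h1α.ne']
    have hker_cont : ContinuousOn (fun τ : ℝ => (τ - s) ^ (1 - α)) (Icc s b) := by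
      intro τ _
      exact ((Real.continuousAt_rpow_const _ _ (Or.inr h1α.le)).comp
        ((continuous_id.sub continuous_const).continuousAt)).continuousWithinAt
    have hfc : ContinuousOn (fun τ => (τ - s) ^ (1 - α) * y τ) (Icc s b) :=
      hker_cont.mul (hyc.mono (Icc_subset_Icc hs.1 le_rfl))
    have hfd : ∀ τ ∈ Ioo s b, HasDerivWithinAt (fun τ => (τ - s) ^ (1 - α) * y τ)
        ((1 - α) * ((τ - s) ^ (-α) * y τ) + (τ - s) ^ (1 - α) * gy τ) (Ioi τ) τ := by
      intro τ hτ
      have hτs : (0:ℝ) < τ - s := by linarith [hτ.1]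
      have hker : HasDerivAt (fun τ : ℝ => (τ - s) ^ (1 - α))
          (1 * (1 - α) * (τ - s) ^ (1 - α - 1)) τ :=
        ((hasDerivAt_id τ).sub_const s).rpow_const (Or.inl hτs.ne')
      have hyD' : HasDerivAt y (gy τ) τ := hyD τ ⟨lt_of_le_of_lt hs.1 hτ.1, hτ.2⟩
      have hmul := hker.mul hyD'
      have hval : 1 * (1 - α) * (τ - s) ^ (1 - α - 1) * y τ + (τ - s) ^ (1 - α) * gy τ
          = (1 - α) * ((τ - s) ^ (-α) * y τ) + (τ - s) ^ (1 - α) * gy τ := by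
        rw [show (1:ℝ) - α - 1 = -α by ring]; ring
      rw [hval] at hmul
      exact hmul.hasDerivWithinAt
    have hi1 : IntervalIntegrable (fun τ => (1 - α) * ((τ - s) ^ (-α) * y τ)) volume s b := by
      refine IntervalIntegrable.const_mul ?_ _
      exact (ker_ii hrα1 s b).mul_continuousOn
        (by rw [uIcc_of_le hsb.le]; exact hyc.mono (Icc_subset_Icc hs.1 le_rfl))
    have hi2 : IntervalIntegrable (fun τ => (τ - s) ^ (1 - α) * gy τ) volume s b := by
      exact (ker_ii hr1α1 s b).mul_continuousOn
        (by rw [uIcc_of_le hsb.le]; exact hgyc.mono (Icc_subset_Icc hs.1 le_rfl))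
    have hftc := intervalIntegral.integral_eq_sub_of_hasDeriv_right_of_le hsb.le hfc hfd
      (hi1.add hi2)
    rw [intervalIntegral.integral_add hi1 hi2, intervalIntegral.integral_const_mul] at hftc
    rw [hG, hK]
    simp only [sub_self, Real.zero_rpow h1α.ne', zero_mul, sub_zero] at hftc
    exact hftc
  -- Step S2 : second Fubini
  have hS2 : ∀ s ∈ Icc a b, K s = (1 - α) * ∫ σ in s..b, E σ := by
    intro s hs
    have hfub := fubini_triangle (a := s) (b := b) (r := -α) hs.2 hrα1 hrα0 gy (fun _ => 1)
      (hgyc.mono (Icc_subset_Icc hs.1 le_rfl)) aestronglyMeasurable_const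
      (M := 1) one_pos.le (ae_of_all _ (fun τ => by norm_num))
    -- left side of hfub equals K s / (1 - α)
    have hleft : ∫ t in s..b, gy t * ∫ τ in s..t, (t - τ) ^ (-α) * 1
        = K s * (1 / (1 - α)) := by
      have hcong : ∀ t ∈ uIcc s b, gy t * (∫ τ in s..t, (t - τ) ^ (-α) * 1)
          = ((t - s) ^ (1 - α) * gy t) * (1 / (1 - α)) := by
        intro t ht
        rw [uIcc_of_le hs.2] at ht
        have : (∫ τ in s..t, (t - τ) ^ (-α) * 1) = (t - s) ^ (-α + 1) / (-α + 1) := by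
          simp only [mul_one]
          exact ker_int hrα1 s t
        rw [this, show -α + 1 = 1 - α by ring]
        field_simp
      rw [intervalIntegral.integral_congr hcong, intervalIntegral.integral_mul_const, hK]
    -- right side of hfub equals ∫ E
    have hright : ∫ τ in s..b, (fun _ : ℝ => (1:ℝ)) τ * ∫ t in τ..b, (t - τ) ^ (-α) * gy t
        = ∫ σ in s..b, E σ := by
      refine intervalIntegral.integral_congr (fun τ _ => ?_)
      rw [hE]; simp
    rw [hleft, hright] at hfub
    field_simp at hfub
    linarith [hfub]
  -- bounds and continuity of E
  obtain ⟨Cy, hCy⟩ := isCompact_Icc.exists_bound_of_continuousOn hgyc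
  have hCy0 : 0 ≤ Cy := le_trans (norm_nonneg _) (hCy a ⟨le_rfl, hab.le⟩)
  have hEbd : ∀ σ ∈ Icc a b, |E σ| ≤ Cy * ((b - a) ^ (-α + 1) / (-α + 1)) := by
    intro σ hσ
    exact param_bound hrα1 hrα0 hgyc hCy0
      (fun τ hτ => by simpa [Real.norm_eq_abs] using hCy τ hτ) hσ
  have hEcont : ∀ σ ∈ Ioo a b, ContinuousAt E σ := fun σ hσ =>
    cont_at_param hrα1 hrα0 hgyc hσ
  have hEcontOn : ContinuousOn E (Ioo a b) := fun σ hσ =>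
    (hEcont σ hσ).continuousWithinAt
  -- derivative of K at interior points
  have hKD : ∀ t₀ ∈ Ioo a b, HasDerivAt K ((1 - α) * (-(E t₀))) t₀ := by
    intro t₀ ht₀
    -- E is interval integrable from b to t₀
    have hEint : IntervalIntegrable E volume b t₀ := by
      rw [intervalIntegrable_iff, uIoc_comm, uIoc_of_le ht₀.2.le]
      have hIoo : IntegrableOn E (Ioo t₀ b) volume := by
        refine Integrable.mono' (integrable_const (Cy * ((b - a) ^ (-α + 1) / (-α + 1)))) ?_ ?_
        · exact ((hEcontOn.mono (fun σ hσ => Set.mem_Ioo.mpr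
            ⟨lt_trans ht₀.1 (Set.mem_Ioo.mp hσ).1, (Set.mem_Ioo.mp hσ).2⟩)).aestronglyMeasurable
            measurableSet_Ioo)
        · filter_upwards [ae_restrict_mem measurableSet_Ioo] with σ hσ
          rw [Real.norm_eq_abs]
          exact hEbd σ ⟨le_trans ht₀.1.le (Set.mem_Ioo.mp hσ).1.le, (Set.mem_Ioo.mp hσ).2.le⟩
      exact hIoo.congr_set_ae Ioo_ae_eq_Ioc.symm
    have hmeas : StronglyMeasurableAtFilter E (nhds t₀) volume :=
      hEcontOn.stronglyMeasurableAtFilter isOpen_Ioo t₀ ht₀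
    have h4 : HasDerivAt (fun u => ∫ σ in b..u, E σ) (E t₀) t₀ :=
      intervalIntegral.integral_hasDerivAt_right hEint hmeas (hEcont t₀ ht₀)
    have h5 : HasDerivAt (fun u => (1 - α) * (-(∫ σ in b..u, E σ))) ((1 - α) * (-(E t₀))) t₀ :=
      (h4.neg).const_mul _
    have hKeq : ∀ s ∈ Icc a b, K s = (1 - α) * (-(∫ σ in b..s, E σ)) := by
      intro s hs
      rw [hS2 s hs, ← intervalIntegral.integral_symm]
    have hev : K =ᶠ[nhds t₀] (fun u => (1 - α) * (-(∫ σ in b..u, E σ))) := by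
      filter_upwards [Icc_mem_nhds ht₀.1 ht₀.2] with s hs
      exact hKeq s hs
    exact (hev.hasDerivAt_iff).mpr h5
  -- derivative of G at interior points
  have hGD : ∀ t₀ ∈ Ioo a b, HasDerivAt G (E t₀ - (b - t₀) ^ (-α) * y b) t₀ := by
    intro t₀ ht₀
    have hbt : (0:ℝ) < b - t₀ := by linarith [ht₀.2]
    have hker : HasDerivAt (fun s : ℝ => (b - s) ^ (1 - α))
        ((-1) * (1 - α) * (b - t₀) ^ (1 - α - 1)) t₀ :=
      ((hasDerivAt_id t₀).const_sub b).rpow_const (Or.inl hbt.ne')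
    have hΨ : HasDerivAt (fun s => ((b - s) ^ (1 - α) * y b - K s) * (1 / (1 - α)))
        (((-1) * (1 - α) * (b - t₀) ^ (1 - α - 1) * y b - (1 - α) * (-(E t₀))) * (1 / (1 - α)))
        t₀ := ((hker.mul_const (y b)).sub (hKD t₀ ht₀)).mul_const _
    have hval : ((-1) * (1 - α) * (b - t₀) ^ (1 - α - 1) * y b - (1 - α) * (-(E t₀)))
        * (1 / (1 - α)) = E t₀ - (b - t₀) ^ (-α) * y b := by
      rw [show (1:ℝ) - α - 1 = -α by ring]
      field_simp
      ring
    rw [hval] at hΨ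
    have hev : G =ᶠ[nhds t₀] (fun s => ((b - s) ^ (1 - α) * y b - K s) * (1 / (1 - α))) := by
      filter_upwards [Icc_mem_nhds ht₀.1 ht₀.2] with s hs
      have := hS1 s hs
      field_simp
      linarith [hS1 s hs]
    exact (hev.hasDerivAt_iff).mpr hΨ
  -- identification with rlDerivRight
  have hrl : ∀ t₀ ∈ Ioo a b,
      rlDerivRight b α y t₀ = -(c * (E t₀ - (b - t₀) ^ (-α) * y b)) := by
    intro t₀ ht₀
    rw [rlDerivRight, ← hc, ← hG, (hGD t₀ ht₀).deriv]
  -- main FTC application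
  have hcGeq : (fun t => c * G t) = rlIntRight b (1 - α) y := funext (fun t => (hJeq t).symm)
  have hFTC : ∫ t in a..b, (-(x t * rlDerivRight b α y t) + (c * G t) * gx t)
      = (c * G b) * x b - (c * G a) * x a := by
    have hfc : ContinuousOn (fun t => (c * G t) * x t) (Icc a b) := by
      refine ContinuousOn.mul ?_ hxc
      rw [hcGeq]; exact hiy
    have hfd : ∀ t ∈ Ioo a b, HasDerivWithinAt (fun t => (c * G t) * x t)
        (-(x t * rlDerivRight b α y t) + (c * G t) * gx t) (Ioi t) t := by
      intro t ht
      have h1 : HasDerivAt (fun t => (c * G t) * x t)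
          ((c * (E t - (b - t) ^ (-α) * y b)) * x t + (c * G t) * gx t) t :=
        ((hGD t ht).const_mul c).mul (hxD t ht)
      have h2 : (c * (E t - (b - t) ^ (-α) * y b)) * x t + (c * G t) * gx t
          = -(x t * rlDerivRight b α y t) + (c * G t) * gx t := by
        rw [hrl t ht]; ring
      rw [h2] at h1
      exact h1.hasDerivWithinAt
    have hii : IntervalIntegrable
        (fun t => -(x t * rlDerivRight b α y t) + (c * G t) * gx t) volume a b := by
      refine IntervalIntegrable.add ?_ ?_
      · apply ContinuousOn.intervalIntegrable
        rw [uIcc_of_le hab.le]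
        exact (hxc.mul hdy).neg
      · apply ContinuousOn.intervalIntegrable
        rw [uIcc_of_le hab.le]
        refine ContinuousOn.mul ?_ hgxc
        rw [hcGeq]; exact hiy
    exact intervalIntegral.integral_eq_sub_of_hasDeriv_right_of_le hab.le hfc hfd hii
  -- Fubini for the left-hand side
  have hLHS : ∫ t in a..b, y t * caputoDeriv a α x t = ∫ t in a..b, (c * G t) * gx t := by
    obtain ⟨Cx, hCx⟩ := isCompact_Icc.exists_bound_of_continuousOn hgxc
    have hCx0 : 0 ≤ Cx := le_trans (norm_nonneg _) (hCx a ⟨le_rfl, hab.le⟩)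
    have haeb : ∀ᵐ τ ∂(volume : Measure ℝ), τ ≠ b := by
      rw [ae_iff]
      refine measure_mono_null (fun u hu => ?_) (by simp : (volume : Measure ℝ) {b} = 0)
      simp only [Set.mem_setOf_eq, not_not] at hu
      simpa using hu
    have hae : ∀ᵐ τ ∂(volume.restrict (Ioc a b)), |deriv x τ| ≤ Cx := by
      rw [ae_restrict_iff' measurableSet_Ioc]
      filter_upwards [haeb] with τ hτ hτ'
      have hmem : τ ∈ Ioo a b := ⟨hτ'.1, lt_of_le_of_ne hτ'.2 hτ⟩
      rw [← derivWithin_of_mem_nhds (Icc_mem_nhds hmem.1 hmem.2)]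
      simpa [Real.norm_eq_abs, hgx] using hCx τ ⟨hmem.1.le, hmem.2.le⟩
    have hfub := fubini_triangle hab.le hrα1 hrα0 y (deriv x) hyc
      ((measurable_deriv x).aestronglyMeasurable.restrict) hCx0 hae
    have hstep1 : ∫ t in a..b, y t * caputoDeriv a α x t
        = c * ∫ t in a..b, y t * ∫ τ in a..t, (t - τ) ^ (-α) * deriv x τ := by
      rw [← intervalIntegral.integral_const_mul]
      refine intervalIntegral.integral_congr (fun t _ => ?_)
      simp only [caputoDeriv, ← hc]
      ring
    have hstep3 : ∫ τ in a..b, deriv x τ * ∫ t in τ..b, (t - τ) ^ (-α) * y t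
        = ∫ τ in a..b, gx τ * G τ := by
      refine intervalIntegral.integral_congr_ae ?_
      filter_upwards [haeb] with τ hτ hτ'
      rw [uIoc_of_le hab.le] at hτ'
      have hmem : τ ∈ Ioo a b := ⟨hτ'.1, lt_of_le_of_ne hτ'.2 hτ⟩
      rw [← derivWithin_of_mem_nhds (Icc_mem_nhds hmem.1 hmem.2), ← hgx, hG]
    have hstep4 : c * ∫ τ in a..b, gx τ * G τ = ∫ t in a..b, (c * G t) * gx t := by
      rw [← intervalIntegral.integral_const_mul]
      refine intervalIntegral.integral_congr (fun t _ => ?_)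
      ring
    rw [hstep1, hfub, hstep3, hstep4]
  -- integrability of the two pieces
  have hint1 : IntervalIntegrable (fun t => -(x t * rlDerivRight b α y t)) volume a b := by
    apply ContinuousOn.intervalIntegrable
    rw [uIcc_of_le hab.le]
    exact (hxc.mul hdy).neg
  have hint2 : IntervalIntegrable (fun t => (c * G t) * gx t) volume a b := by
    apply ContinuousOn.intervalIntegrable
    rw [uIcc_of_le hab.le]
    refine ContinuousOn.mul ?_ hgxc
    have : (fun t => c * G t) = rlIntRight b (1 - α) y := funext (fun t => (hJeq t).symm)
    rw [this]; exact hiy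
  rw [intervalIntegral.integral_add hint1 hint2] at hFTC
  have hsplit : ∫ t in a..b, -(x t * rlDerivRight b α y t)
      = -∫ t in a..b, x t * rlDerivRight b α y t := intervalIntegral.integral_neg
  rw [hsplit] at hFTC
  rw [hLHS, hJeq b, hJeq a]
  linarith [hFTC]
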